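/- Let R be an infinite commutative ring that is not an integral domain. If the compressed zero-divisor graph Γ_E(R) has finitely many vertices, then the zero-divisor graph Γ(R) has no finite determining set. -/

import Mathlib

/-- The set of nonzero zero-divisors of a commutative ring `R`. -/
def zdvSet (R : Type*) [CommRing R] : Set R :=
  {x : R | x ≠ 0 ∧ ∃ y : R, y ≠ 0 ∧ x * y = 0}

/-- The nonzero zero-divisors of `R`, the vertex set of the zero-divisor graph. -/
abbrev ZdvR (R : Type*) [CommRing R] : Type _ := ↥(zdvSet R)

/-- The zero-divisor graph of a commutative ring `R`. -/
def zdgR (R : Type*) [CommRing R] : SimpleGraph (ZdvR R) :=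
  SimpleGraph.fromRel (fun x y => x.1 * y.1 = 0)

/-- A set `S` of vertices is a determining set: any automorphism fixing `S` pointwise
fixes every vertex. -/
def IsDetermining {V : Type*} (G : SimpleGraph V) (S : Set V) : Prop :=
  ∀ σ : G ≃g G, (∀ v ∈ S, σ v = v) → ∀ v, σ v = v

/-- The determining number: the least cardinality of a (finite) determining set. -/
noncomputable def detNum {V : Type*} (G : SimpleGraph V) : ℕ :=
  sInf {m | ∃ S : Set V, S.Finite ∧ S.ncard = m ∧ IsDetermining G S}

lemma zdg_adj {R : Type*} [CommRing R] (x y : ZdvR R) :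
    (zdgR R).Adj x y ↔ x ≠ y ∧ x.1 * y.1 = 0 := by
  rw [zdgR, SimpleGraph.fromRel_adj]
  constructor
  · rintro ⟨h1, h2 | h2⟩
    · exact ⟨h1, h2⟩
    · exact ⟨h1, by rwa [mul_comm]⟩
  · rintro ⟨h1, h2⟩; exact ⟨h1, Or.inl h2⟩

open scoped Classical in
noncomputable def swapIso {R : Type*} [CommRing R] (u v : ZdvR R)
    (h : ∀ w : R, u.1 * w = 0 ↔ v.1 * w = 0) : zdgR R ≃g zdgR R where
  toEquiv := Equiv.swap u v
  map_rel_iff' := by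
    have key1 : ∀ (x : ZdvR R) (w : R),
        (Equiv.swap u v x).1 * w = 0 ↔ x.1 * w = 0 := by
      intro x w
      rcases eq_or_ne x u with rfl | hxu
      · rw [Equiv.swap_apply_left]; exact (h w).symm
      · rcases eq_or_ne x v with rfl | hxv
        · rw [Equiv.swap_apply_right]; exact h w
        · rw [Equiv.swap_apply_of_ne_of_ne hxu hxv]
    have key : ∀ (x y : ZdvR R),
        (Equiv.swap u v x).1 * (Equiv.swap u v y).1 = 0 ↔ x.1 * y.1 = 0 := by
      intro x y
      rw [key1 x, mul_comm, key1 y, mul_comm]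
    intro a b
    rw [zdg_adj, zdg_adj, key]
    simp [Equiv.swap_apply_eq_iff]

theorem no_finite_determining_set (R : Type*) [CommRing R] [Infinite R]
    (hd : ¬ IsDomain R)
    (hfin : (Set.range fun x : ZdvR R => {w : R | x.1 * w = 0}).Finite) :
    ∀ S : Set (ZdvR R), S.Finite → ¬ IsDetermining (zdgR R) S := by
  classical
  intro S hS hdet
  -- get nonzero zero divisors
  have hnzd : ¬ NoZeroDivisors R := fun h => hd (by exact @NoZeroDivisors.to_isDomain R _ _ h)
  obtain ⟨a, b, hab, ha, hb⟩ : ∃ a b : R, a * b = 0 ∧ a ≠ 0 ∧ b ≠ 0 := by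
    by_contra hc
    push_neg at hc
    refine hnzd ⟨fun {x y} hxy => ?_⟩
    by_cases hx : x = 0
    · exact Or.inl hx
    · exact Or.inr (hc x y hxy hx)
  -- zdvSet is infinite
  have hZinf : (zdvSet R).Infinite := by
    have hann : (({w : R | a * w = 0} : Set R)).Infinite ∨
        (Set.range fun r : R => r * a).Infinite := by
      by_contra hc
      push_neg at hc
      obtain ⟨h1, h2⟩ := hc
      -- then some fiber of r ↦ r*a is infinite, giving infinite ann(a)
      haveI : Finite ↥(Set.range fun r : R => r * a) := h2
      obtain ⟨c, hc⟩ := Finite.exists_infinite_fiber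
        (Set.rangeFactorization (fun r : R => r * a))
      have hfib : ((Set.rangeFactorization (fun r : R => r * a)) ⁻¹' {c}).Infinite :=
        Set.infinite_coe_iff.mp hc
      obtain ⟨r0, hr0⟩ := hfib.nonempty
      have himg : ((fun r : R => r - r0) '' ((Set.rangeFactorization (fun r : R => r * a)) ⁻¹' {c})).Infinite :=
        hfib.image (sub_left_injective.injOn)
      refine h1.not_infinite (himg.mono ?_)
      rintro _ ⟨r, hr, rfl⟩
      have h3 : r * a = r0 * a := by
        have := hr.trans hr0.symm
        exact congrArg Subtype.val this
      simp only [Set.mem_setOf_eq]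
      rw [mul_comm, sub_mul, h3, sub_self]
    rcases hann with h1 | h1
    · refine (h1.diff (Set.finite_singleton 0)).mono ?_
      rintro w ⟨hw, hw0⟩
      simp only [Set.mem_singleton_iff] at hw0
      exact ⟨hw0, a, ha, by rw [mul_comm]; exact hw⟩
    · refine (h1.diff (Set.finite_singleton 0)).mono ?_
      rintro _ ⟨⟨r, rfl⟩, hw0⟩
      simp only [Set.mem_singleton_iff] at hw0
      exact ⟨hw0, b, hb, by rw [mul_assoc, hab, mul_zero]⟩
  haveI : Infinite (ZdvR R) := Set.infinite_coe_iff.mpr hZinf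
  -- find an infinite annihilator class
  haveI : Finite ↥(Set.range fun x : ZdvR R => {w : R | x.1 * w = 0}) := hfin
  obtain ⟨c, hc⟩ := Finite.exists_infinite_fiber
    (Set.rangeFactorization (fun x : ZdvR R => {w : R | x.1 * w = 0}))
  have hfib : ((Set.rangeFactorization (fun x : ZdvR R => {w : R | x.1 * w = 0})) ⁻¹' {c}).Infinite :=
    Set.infinite_coe_iff.mp hc
  obtain ⟨u, hu, v, hv, huv⟩ := (hfib.diff hS).nontrivial
  have heq : ({w : R | u.1 * w = 0} : Set R) = {w : R | v.1 * w = 0} := by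
    have h1 := congrArg Subtype.val (hu.1.trans hv.1.symm)
    exact h1
  have h : ∀ w : R, u.1 * w = 0 ↔ v.1 * w = 0 := fun w => Set.ext_iff.mp heq w
  have hfix : ∀ s ∈ S, (swapIso u v h) s = s := by
    intro s hs
    have hsu : s ≠ u := fun e => hu.2 (e ▸ hs)
    have hsv : s ≠ v := fun e => hv.2 (e ▸ hs)
    exact Equiv.swap_apply_of_ne_of_ne hsu hsv
  have := hdet (swapIso u v h) hfix u
  have h2 : (swapIso u v h) u = v := Equiv.swap_apply_left u v
  exact huv (h2.symm.trans this).symm
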